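/- Let N = (P, T, Pre, Post) be a Petri net, M_0 ∈ ℕ^P a marking and p_f ∈ P a place. Then the set {n ∈ ℕ | the marking M^(n) with M^(n)(p_f) = n and M^(n)(p) = 0 for all p ≠ p_f belongs to Reach(M_0)} is semilinear. Equivalently, the set of markings Reach(M_0) ∩ {M ∈ ℕ^P | M(p) = 0 for all p ∈ P \ {p_f}} is a finite union of sets of the form {vector with b + λ·p tokens in p_f and 0 elsewhere | λ ∈ ℕ}. -/

import Mathlib

/-- A Petri net with (finite) sets `P` of places and `T` of transitions:
pre- and post-condition functions assigning to each transition a multiset of places,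
represented as a function `P → ℕ`. -/
structure PetriNet (P T : Type) : Type where
  Pre : T → P → ℕ
  Post : T → P → ℕ

namespace PetriNet

variable {P T : Type} (N : PetriNet P T)

/-- The firing relation: `M ⇒ M'` iff some transition `t` satisfies `Pre t ≤ M`
and `M' = M - Pre t + Post t` (pointwise). -/
def Fire (M M' : P → ℕ) : Prop :=
  ∃ t : T, N.Pre t ≤ M ∧ M' = M - N.Pre t + N.Post t

/-- Reachability: reflexive-transitive closure of the firing relation. -/
def Reach : (P → ℕ) → (P → ℕ) → Prop := Relation.ReflTransGen N.Fire

end PetriNet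

/-- A subset of `ℕ` is semilinear if it is a finite union of arithmetic progressions
`{b + λ·p | λ ∈ ℕ}` (with `b, p ∈ ℕ`, `p = 0` allowed). -/
def IsSemilinearNat (S : Set ℕ) : Prop :=
  ∃ F : Finset (ℕ × ℕ), S = ⋃ bp ∈ F, {n : ℕ | ∃ l : ℕ, n = bp.1 + l * bp.2}

namespace PetriAux

variable {P T : Type}

/-- one firing step -/
def step (N : PetriNet P T) (t : T) (M : P → ℕ) : P → ℕ := M - N.Pre t + N.Post t

lemma fire_step {N : PetriNet P T} {t : T} {M : P → ℕ} (h : N.Pre t ≤ M) :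
    N.Fire M (step N t M) := ⟨t, h, rfl⟩

lemma step_add {N : PetriNet P T} {t : T} {M Z : P → ℕ} (h : N.Pre t ≤ M) :
    step N t (M + Z) = step N t M + Z := by
  funext p
  have h2 : N.Pre t p ≤ M p := h p
  simp only [step, Pi.add_apply, Pi.sub_apply]
  omega

lemma step_mono {N : PetriNet P T} (t : T) {A B : P → ℕ} (h : A ≤ B) :
    step N t A ≤ step N t B := by
  intro p
  have h2 : A p ≤ B p := h p
  simp only [step, Pi.add_apply, Pi.sub_apply]
  omega

lemma reach_add {N : PetriNet P T} {A B : P → ℕ} (h : N.Reach A B) (Z : P → ℕ) :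
    N.Reach (A + Z) (B + Z) := by
  induction h with
  | refl => exact Relation.ReflTransGen.refl
  | tail _ hbc ih =>
    obtain ⟨t, hpre, rfl⟩ := hbc
    refine Relation.ReflTransGen.tail ih ⟨t, le_trans hpre le_self_add, ?_⟩
    exact (step_add hpre).symm

/-- Valid traces: list of (marking-before, transition) pairs. -/
inductive TVal (N : PetriNet P T) : (P → ℕ) → List ((P → ℕ) × T) → (P → ℕ) → Prop
  | nil (M : P → ℕ) : TVal N M [] M
  | cons {M : P → ℕ} {t : T} {l F} : N.Pre t ≤ M → TVal N (step N t M) l F →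
      TVal N M ((M, t) :: l) F

lemma tval_reach {N : PetriNet P T} {A l F} (h : TVal N A l F) : N.Reach A F := by
  induction h with
  | nil M => exact Relation.ReflTransGen.refl
  | cons hpre _ ih => exact Relation.ReflTransGen.head (fire_step hpre) ih

lemma reach_tval {N : PetriNet P T} {A F : P → ℕ} (h : N.Reach A F) :
    ∃ l, TVal N A l F := by
  induction h using Relation.ReflTransGen.head_induction_on with
  | refl => exact ⟨[], TVal.nil F⟩
  | head hab _ ih =>
    obtain ⟨t, hpre, rfl⟩ := hab
    obtain ⟨l, hl⟩ := ih
    exact ⟨_, TVal.cons hpre hl⟩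

end PetriAux

namespace PetriAux

variable {P T : Type}

/-- `Emb N A w F B G`: there is a run of transition word `w` from `A` to `F`,
a run from `B` to `G` containing `w` as a subword, such that at each matched
transition the big run's marking dominates the small run's marking, and `F ≤ G`. -/
inductive Emb (N : PetriNet P T) : (P → ℕ) → List T → (P → ℕ) → (P → ℕ) → (P → ℕ) → Prop
  | nil {A B G : P → ℕ} : N.Reach B G → A ≤ G → Emb N A [] A B G
  | match_ {A F B G : P → ℕ} {w : List T} {t : T} : A ≤ B → N.Pre t ≤ A →
      Emb N (step N t A) w F (step N t B) G → Emb N A (t :: w) F B G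
  | skip {A F B G : P → ℕ} {w : List T} {t : T} : N.Pre t ≤ B →
      Emb N A w F (step N t B) G → Emb N A w F B G

lemma emb_reach {N : PetriNet P T} {A w F B G} (h : Emb N A w F B G) : N.Reach B G := by
  induction h with
  | nil hr _ => exact hr
  | match_ hAB hpre _ ih =>
    exact Relation.ReflTransGen.head (fire_step (le_trans hpre hAB)) ih
  | skip hpre _ ih => exact Relation.ReflTransGen.head (fire_step hpre) ih

lemma emb_le {N : PetriNet P T} {A w F B G} (h : Emb N A w F B G) : F ≤ G := by
  induction h with
  | nil _ hAG => exact hAG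
  | match_ _ _ _ ih => exact ih
  | skip _ _ ih => exact ih

lemma emb_nil_elim {N : PetriNet P T} {A w F B G} (h : Emb N A w F B G) (hw : w = []) :
    F = A ∧ N.Reach B G ∧ A ≤ G := by
  induction h with
  | nil hr hAG => exact ⟨rfl, hr, hAG⟩
  | match_ _ _ _ _ => simp at hw
  | skip hpre _ ih =>
    obtain ⟨h1, h2, h3⟩ := ih hw
    exact ⟨h1, Relation.ReflTransGen.head (fire_step hpre) h2, h3⟩

lemma emb_diag {N : PetriNet P T} {A l F} (h : TVal N A l F) :
    Emb N A (l.map Prod.snd) F A F := by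
  induction h with
  | nil M => exact Emb.nil Relation.ReflTransGen.refl le_rfl
  | cons hpre _ ih => exact Emb.match_ le_rfl hpre ih

/-- letter order for Higman's lemma -/
def LetterLE (a b : (P → ℕ) × T) : Prop := a.1 ≤ b.1 ∧ a.2 = b.2

instance : IsRefl ((P → ℕ) × T) LetterLE := ⟨fun _ => ⟨le_rfl, rfl⟩⟩

instance : IsTrans ((P → ℕ) × T) LetterLE :=
  ⟨fun _ _ _ h1 h2 => ⟨le_trans h1.1 h2.1, h1.2.trans h2.2⟩⟩

instance : IsPreorder ((P → ℕ) × T) LetterLE where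
  refl _ := ⟨le_rfl, rfl⟩
  trans _ _ _ h1 h2 := ⟨le_trans h1.1 h2.1, h1.2.trans h2.2⟩

instance : IsPreorder (List ((P → ℕ) × T)) (List.SublistForall₂ LetterLE) := {}

lemma emb_of_slf {N : PetriNet P T} :
    ∀ {l l' : List ((P → ℕ) × T)}, List.SublistForall₂ LetterLE l l' →
    ∀ {A F B G : P → ℕ}, TVal N A l F → TVal N B l' G → F ≤ G →
    Emb N A (l.map Prod.snd) F B G := by
  intro l l' hslf
  induction hslf with
  | nil =>
    intro A F B G tv1 tv2 hFG
    cases tv1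
    exact Emb.nil (tval_reach tv2) hFG
  | @cons a₁ a₂ l₁ l₂ hr _ ih =>
    intro A F B G tv1 tv2 hFG
    cases tv1 with
    | cons hpre1 tv1' =>
      cases tv2 with
      | cons hpre2 tv2' =>
        obtain ⟨hle, hteq⟩ := hr
        simp only at hle hteq
        subst hteq
        exact Emb.match_ hle hpre1 (ih tv1' tv2' hFG)
  | @cons_right a l₁ l₂ _ ih =>
    intro A F B G tv1 tv2 hFG
    cases tv2 with
    | cons hpre2 tv2' => exact Emb.skip hpre2 (ih tv1 tv2' hFG)

end PetriAux

namespace PetriAux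

variable {P T : Type}

lemma add_sub_swap {x y a : P → ℕ} (h1 : a ≤ x) (h2 : a ≤ y) :
    x + (y - a) = y + (x - a) := by
  funext p
  have e1 : a p ≤ x p := h1 p
  have e2 : a p ≤ y p := h2 p
  simp only [Pi.add_apply, Pi.sub_apply]
  omega

lemma step_combine {N : PetriNet P T} {t : T} {A B1 B2 : P → ℕ}
    (hp : N.Pre t ≤ A) (h1 : A ≤ B1) (h2 : A ≤ B2) :
    step N t (B2 + (B1 - A)) = step N t B1 + (step N t B2 - step N t A) := by
  funext p
  have e0 : N.Pre t p ≤ A p := hp p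
  have e1 : A p ≤ B1 p := h1 p
  have e2 : A p ≤ B2 p := h2 p
  simp only [step, Pi.add_apply, Pi.sub_apply]
  omega

lemma emb_inner {N : PetriNet P T} :
    ∀ {A : P → ℕ} {w' : List T} {F B2 G2 : P → ℕ}, Emb N A w' F B2 G2 →
    ∀ (t : T) (w : List T) (B1 G1 : P → ℕ), w' = t :: w → N.Pre t ≤ A → A ≤ B1 →
    (∀ (B2' G2' : P → ℕ), Emb N (step N t A) w F B2' G2' → step N t A ≤ B2' →
        Emb N (step N t A) w F (step N t B1 + (B2' - step N t A)) (G1 + (G2' - F))) →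
    Emb N A (t :: w) F (B2 + (B1 - A)) (G1 + (G2 - F)) := by
  intro A w' F B2 G2 emb2
  induction emb2 with
  | nil hr hAG =>
    intro t w B1 G1 hw
    simp at hw
  | @match_ A F B G w₀ t₀ hAB2 hpre emb2' ih =>
    intro t w B1 G1 hw hpreA hAB1 K
    injection hw with h1 h2
    subst h1; subst h2
    have KC := K _ _ emb2' (step_mono _ hAB2)
    refine Emb.match_ (le_trans hAB2 le_self_add) hpreA ?_
    rw [step_combine hpreA hAB1 hAB2]
    exact KC
  | @skip A F B G w₀ t₀ hpre emb2' ih =>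
    intro t w B1 G1 hw hpreA hAB1 K
    have IH := ih t w B1 G1 hw hpreA hAB1 K
    refine Emb.skip (le_trans hpre le_self_add) ?_
    rw [step_add hpre]
    exact IH

lemma emb_amalg {N : PetriNet P T} :
    ∀ {A : P → ℕ} {w : List T} {F B1 G1 : P → ℕ}, Emb N A w F B1 G1 →
    ∀ {B2 G2 : P → ℕ}, Emb N A w F B2 G2 → A ≤ B2 →
    Emb N A w F (B1 + (B2 - A)) (G1 + (G2 - F)) := by
  intro A w F B1 G1 emb1
  induction emb1 with
  | @nil A B G hr hAG =>
    intro B2 G2 emb2 hAB2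
    obtain ⟨-, hr2, hAG2⟩ := emb_nil_elim emb2 rfl
    refine Emb.nil ?_ (le_trans hAG le_self_add)
    have r1 := reach_add hr (B2 - A)
    have r2 := reach_add hr2 (G - A)
    rw [add_sub_swap hAG hAB2] at r1
    rw [add_sub_swap hAG2 hAG] at r2
    exact Relation.ReflTransGen.trans r1 r2
  | @match_ A F B G w t hAB1 hpreA emb1' ih =>
    intro B2 G2 emb2 hAB2
    have HI := emb_inner emb2 t w B G rfl hpreA hAB1 (fun B2' G2' e h => ih e h)
    rw [add_sub_swap hAB1 hAB2]
    exact HI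
  | @skip A F B G w t hpre emb1' ih =>
    intro B2 G2 emb2 hAB2
    have IH := ih emb2 hAB2
    refine Emb.skip (le_trans hpre le_self_add) ?_
    rw [step_add hpre]
    exact IH

end PetriAux

namespace PetriAux

variable {P T : Type}

lemma pwo_eq_univ {β : Type} [Finite β] :
    (Set.univ : Set β).PartiallyWellOrderedOn (· = ·) := by
  rw [Set.partiallyWellOrderedOn_iff_exists_lt]
  intro f _
  obtain ⟨m, n, hmn, h⟩ := Finite.exists_ne_map_eq_of_infinite f
  rcases lt_or_gt_of_ne hmn with h' | h'
  · exact ⟨m, n, h', h⟩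
  · exact ⟨n, m, h', h.symm⟩

lemma pi_nat_pwo [Finite P] : (Set.univ : Set (P → ℕ)).IsPWO := by
  haveI : IsWellOrder ℕ (· < ·) := inferInstance
  exact Set.isPWO_univ_iff.2 inferInstance

lemma pwo_letter [Finite P] [Finite T] :
    (Set.univ : Set ((P → ℕ) × T)).PartiallyWellOrderedOn LetterLE := by
  have h := Set.PartiallyWellOrderedOn.prod (pi_nat_pwo (P := P)) (pwo_eq_univ (β := T))
  rw [Set.univ_prod_univ] at h
  exact h

lemma pwo_run [Finite P] [Finite T] :
    (Set.univ : Set (List ((P → ℕ) × T) × (P → ℕ))).PartiallyWellOrderedOn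
      (fun x y => List.SublistForall₂ LetterLE x.1 y.1 ∧ x.2 ≤ y.2) := by
  have hL := Set.PartiallyWellOrderedOn.partiallyWellOrderedOn_sublistForall₂
    (r := LetterLE) (pwo_letter (P := P) (T := T))
  have hs : {l : List ((P → ℕ) × T) | ∀ x, x ∈ l → x ∈ (Set.univ : Set ((P → ℕ) × T))} =
      Set.univ := by ext l; simp
  rw [hs] at hL
  have h := Set.PartiallyWellOrderedOn.prod hL (pi_nat_pwo (P := P))
  rw [Set.univ_prod_univ] at h
  exact h

lemma exists_basis {α : Type} {r : α → α → Prop}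
    (h : (Set.univ : Set α).PartiallyWellOrderedOn r) (s : Set α) :
    ∃ B : Finset α, ↑B ⊆ s ∧ ∀ x ∈ s, ∃ b ∈ B, r b x := by
  classical
  by_contra hc
  push_neg at hc
  choose f h1 h2 using hc
  let g : ℕ → {B : Finset α // ↑B ⊆ s} := fun n => Nat.rec
    ⟨∅, by simp⟩
    (fun _ p => ⟨insert (f p.1 p.2) p.1, by
      rw [Finset.coe_insert]
      exact Set.insert_subset (h1 p.1 p.2) p.2⟩) n
  let a : ℕ → α := fun n => f (g n).1 (g n).2
  have hmem : ∀ n, a n ∈ (g (n + 1)).1 := fun n => Finset.mem_insert_self _ _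
  have hmono : ∀ m n, m ≤ n → (g m).1 ⊆ (g n).1 := by
    intro m n hmn
    induction n, hmn using Nat.le_induction with
    | base => exact fun x hx => hx
    | succ n hmn ih => exact fun x hx => Finset.mem_insert_of_mem (ih hx)
  have key : ∀ m n, m < n → ¬ r (a m) (a n) := by
    intro m n hmn
    exact h2 (g n).1 (g n).2 (a m) (hmono (m + 1) n hmn (hmem m))
  obtain ⟨m, n, hmn, hr⟩ := Set.partiallyWellOrderedOn_iff_exists_lt.1 h a fun n => Set.mem_univ _
  exact key m n hmn hr

end PetriAux

namespace PetriAux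

lemma semilinear_finite {S : Set ℕ} (h : S.Finite) : IsSemilinearNat S := by
  classical
  refine ⟨h.toFinset.image (fun d => (d, 0)), ?_⟩
  ext n
  simp only [Set.mem_iUnion, Finset.mem_image, Set.Finite.mem_toFinset, Set.mem_setOf_eq,
    exists_prop]
  constructor
  · intro hn
    exact ⟨(n, 0), ⟨n, hn, rfl⟩, 0, by simp⟩
  · rintro ⟨bp, ⟨a, ha, rfl⟩, l, hl⟩
    simpa [hl] using ha

lemma semilinear_union {S S' : Set ℕ} (h : IsSemilinearNat S) (h' : IsSemilinearNat S') :
    IsSemilinearNat (S ∪ S') := by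
  classical
  obtain ⟨F, rfl⟩ := h
  obtain ⟨F', rfl⟩ := h'
  exact ⟨F ∪ F', (Finset.set_biUnion_union F F' _).symm⟩

lemma semilinear_biUnion {β : Type} (B : Finset β) (f : β → Set ℕ)
    (h : ∀ b ∈ B, IsSemilinearNat (f b)) : IsSemilinearNat (⋃ b ∈ B, f b) := by
  classical
  induction B using Finset.induction with
  | empty => exact ⟨∅, by simp⟩
  | @insert b B hb ih =>
    rw [Finset.set_biUnion_insert]
    exact semilinear_union (h b (Finset.mem_insert_self _ _))
      (ih fun c hc => h c (Finset.mem_insert_of_mem hc))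

lemma semilinear_ap (b g : ℕ) : IsSemilinearNat {n : ℕ | ∃ l : ℕ, n = b + l * g} := by
  refine ⟨{(b, g)}, ?_⟩
  ext n
  simp

/-- the image of a (not nec. f.g.) additive submonoid of ℕ under `v + ·` is semilinear. -/
lemma semilinear_addimage_submonoid (D : Set ℕ) (h0 : 0 ∈ D)
    (hadd : ∀ a ∈ D, ∀ b ∈ D, a + b ∈ D) (v : ℕ) :
    IsSemilinearNat ((fun d => v + d) '' D) := by
  classical
  have mul_mem : ∀ (k x : ℕ), x ∈ D → k * x ∈ D := by
    intro k
    induction k with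
    | zero => intro x _; simpa using h0
    | succ k ih =>
      intro x hx
      have := hadd _ (ih x hx) _ hx
      simpa [Nat.succ_mul] using this
  by_cases htriv : ∀ d ∈ D, d = 0
  · have himg : (fun d => v + d) '' D = {v} := by
      ext n
      constructor
      · rintro ⟨d, hd, rfl⟩
        simp [htriv d hd]
      · rintro rfl
        exact ⟨0, h0, by simp⟩
    rw [himg]
    exact semilinear_finite (Set.finite_singleton v)
  · push_neg at htriv
    obtain ⟨a, haD, ha0⟩ := htriv
    have hne : (Set.Nonempty {k : ℕ | 0 < k ∧ ∃ x ∈ D, ∃ y ∈ D, x = y + k}) :=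
      ⟨a, Nat.pos_of_ne_zero ha0, a, haD, 0, h0, (zero_add a).symm⟩
    obtain ⟨g, ⟨hgpos, t, htD, u, huD, htu⟩, hmin⟩ :
        ∃ g, (0 < g ∧ ∃ t ∈ D, ∃ u ∈ D, t = u + g) ∧
          ∀ k, (0 < k ∧ ∃ x ∈ D, ∃ y ∈ D, x = y + k) → g ≤ k :=
      ⟨_, Nat.sInf_mem hne, fun k hk => Nat.sInf_le hk⟩
    have gdvd : ∀ d ∈ D, g ∣ d := by
      intro d hd
      rcases Nat.eq_zero_or_pos (d % g) with hr | hr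
      · exact Nat.dvd_of_mod_eq_zero hr
      · exfalso
        have hmem : 0 < d % g ∧ ∃ x ∈ D, ∃ y ∈ D, x = y + d % g := by
          refine ⟨hr, d + (d / g) * u, hadd _ hd _ (mul_mem _ _ huD), (d / g) * t,
            mul_mem _ _ htD, ?_⟩
          have h1 : (d / g) * t = (d / g) * u + (d / g) * g := by rw [htu]; ring
          have h2 : g * (d / g) + d % g = d := Nat.div_add_mod d g
          have h3 : (d / g) * g = g * (d / g) := Nat.mul_comm _ _
          omega
        have h4 := hmin _ hmem
        have h5 : d % g < g := Nat.mod_lt d hgpos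
        omega
    obtain ⟨u', hu'⟩ := gdvd u huD
    have rep : ∀ q, u' * u' ≤ q → g * q ∈ D := by
      intro q hq
      rcases Nat.eq_zero_or_pos u' with hu0 | hu0
      · subst hu0
        simp only [Nat.mul_zero] at hu'
        have htg : t = g := by omega
        have hgq : g * q = q * t := by rw [htg]; ring
        rw [hgq]
        exact mul_mem q t htD
      · obtain ⟨x, m, hxlt, hq1, hxm⟩ : ∃ x m, x < u' ∧ q = u' * m + x ∧ x ≤ m := by
          refine ⟨q % u', q / u', Nat.mod_lt _ hu0, ?_, ?_⟩
          · have := Nat.div_add_mod q u'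
            omega
          · have h6 := (Nat.le_div_iff_mul_le hu0).2 hq
            have h7 : q % u' < u' := Nat.mod_lt _ hu0
            omega
        obtain ⟨y, rfl⟩ : ∃ y, m = x + y := ⟨m - x, by omega⟩
        have key : g * q = x * t + (x + y - x) * u := by
          rw [htu, hu', hq1]
          simp only [Nat.add_sub_cancel_left]
          ring
        rw [hq1, ← hq1, key]
        exact hadd _ (mul_mem x t htD) _ (mul_mem (x + y - x) u huD)
    have hdecomp : ∀ d, d ∈ D ↔ (d ∈ D ∧ d < g * (u' * u')) ∨ ∃ l, d = g * (u' * u') + l * g := by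
      intro d
      constructor
      · intro hd
        by_cases hdK : d < g * (u' * u')
        · exact Or.inl ⟨hd, hdK⟩
        · right
          obtain ⟨q, hq⟩ := gdvd d hd
          have hle : g * (u' * u') ≤ g * q := by omega
          have hqq : u' * u' ≤ q := Nat.le_of_mul_le_mul_left hle hgpos
          obtain ⟨l, rfl⟩ : ∃ l, q = u' * u' + l := ⟨q - u' * u', by omega⟩
          refine ⟨l, by rw [hq]; ring⟩
      · rintro (⟨hd, _⟩ | ⟨l, rfl⟩)
        · exact hd
        · have he : g * (u' * u') + l * g = g * (u' * u' + l) := by ring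
          rw [he]
          exact rep _ (by omega)
    have himg : (fun d => v + d) '' D =
        ((fun d => v + d) '' (D ∩ Set.Iio (g * (u' * u')))) ∪
          {n : ℕ | ∃ l, n = (v + g * (u' * u')) + l * g} := by
      ext n
      simp only [Set.mem_image, Set.mem_union, Set.mem_inter_iff, Set.mem_Iio,
        Set.mem_setOf_eq]
      constructor
      · rintro ⟨d, hd, rfl⟩
        rcases (hdecomp d).1 hd with ⟨hd', hlt⟩ | ⟨l, rfl⟩
        · exact Or.inl ⟨d, ⟨hd', hlt⟩, rfl⟩
        · exact Or.inr ⟨l, by ring⟩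
      · rintro (⟨d, ⟨hd, _⟩, rfl⟩ | ⟨l, rfl⟩)
        · exact ⟨d, hd, rfl⟩
        · exact ⟨g * (u' * u') + l * g, (hdecomp _).2 (Or.inr ⟨l, rfl⟩), by ring⟩
    rw [himg]
    refine semilinear_union (semilinear_finite ?_) (semilinear_ap _ _)
    exact ((Set.finite_Iio _).subset Set.inter_subset_right).image _

end PetriAux

namespace PetriAux

variable {P T : Type}

/-- the set of values `n` such that the single marking `n·pf` is reachable by a run
embedding the base run `b` (with domination). -/
def ESet [DecidableEq P] (N : PetriNet P T) (M0 : P → ℕ) (pf : P)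
    (b : List ((P → ℕ) × T) × (P → ℕ)) : Set ℕ :=
  {n | Nonempty (Emb N M0 (b.1.map Prod.snd) b.2 M0 (Pi.single pf n))}

lemma ESet_semilinear [DecidableEq P] {N : PetriNet P T} {M0 : P → ℕ} {pf : P}
    {b : List ((P → ℕ) × T) × (P → ℕ)} (tvb : TVal N M0 b.1 b.2) (vb : ℕ)
    (hvb : b.2 = Pi.single pf vb) : IsSemilinearNat (ESet N M0 pf b) := by
  have h0 : (0 : ℕ) ∈ {d : ℕ | vb + d ∈ ESet N M0 pf b} := by
    refine ⟨?_⟩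
    rw [Nat.add_zero, ← hvb]
    exact emb_diag tvb
  have hvble : ∀ n ∈ ESet N M0 pf b, vb ≤ n := by
    intro n hn
    obtain ⟨emb⟩ := hn
    have hle := emb_le emb
    rw [hvb] at hle
    have h2 : (Pi.single pf vb : P → ℕ) pf ≤ (Pi.single pf n : P → ℕ) pf := hle pf
    simpa using h2
  have hadd : ∀ d1 ∈ {d : ℕ | vb + d ∈ ESet N M0 pf b},
      ∀ d2 ∈ {d : ℕ | vb + d ∈ ESet N M0 pf b},
      d1 + d2 ∈ {d : ℕ | vb + d ∈ ESet N M0 pf b} := by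
    intro d1 hd1 d2 hd2
    obtain ⟨emb1⟩ := hd1
    obtain ⟨emb2⟩ := hd2
    have hAm := emb_amalg emb1 emb2 (le_refl M0)
    have e1 : M0 + (M0 - M0) = M0 := by
      funext p
      simp only [Pi.add_apply, Pi.sub_apply]
      omega
    have e2 : Pi.single pf (vb + d1) + (Pi.single pf (vb + d2) - b.2) =
        Pi.single pf (vb + (d1 + d2)) := by
      rw [hvb]
      funext p
      by_cases hp : p = pf
      · subst hp
        simp only [Pi.add_apply, Pi.sub_apply, Pi.single_eq_same]
        omega
      · simp only [Pi.add_apply, Pi.sub_apply, Pi.single_eq_of_ne hp]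
        omega
    rw [e1, e2] at hAm
    exact ⟨hAm⟩
  have hEimg : ESet N M0 pf b =
      (fun d => vb + d) '' {d : ℕ | vb + d ∈ ESet N M0 pf b} := by
    ext n
    constructor
    · intro hn
      refine ⟨n - vb, ?_, Nat.add_sub_cancel' (hvble n hn)⟩
      show vb + (n - vb) ∈ ESet N M0 pf b
      rw [Nat.add_sub_cancel' (hvble n hn)]
      exact hn
    · rintro ⟨d, hd, rfl⟩
      exact hd
  rw [hEimg]
  exact semilinear_addimage_submonoid _ h0 hadd vb

end PetriAux


open PetriAux in
/-- For a Petri net `N`, an initial marking `M₀` and a place `p_f`,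
the set of `n ∈ ℕ` such that the marking with `n` tokens in `p_f` and none elsewhere
is reachable from `M₀` is semilinear. -/
theorem petri_single_place_reach_semilinear {P T : Type} [Fintype P] [Fintype T]
    [DecidableEq P] (N : PetriNet P T) (M0 : P → ℕ) (pf : P) :
    IsSemilinearNat {n : ℕ | N.Reach M0 (Pi.single pf n)} := by

  classical
  obtain ⟨B, hBs, hBbasis⟩ := exists_basis (pwo_run (P := P) (T := T))
    {x : List ((P → ℕ) × T) × (P → ℕ) | TVal N M0 x.1 x.2 ∧ ∃ n, x.2 = Pi.single pf n}
  have hcover : {n : ℕ | N.Reach M0 (Pi.single pf n)} = ⋃ b ∈ B, ESet N M0 pf b := by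
    ext n
    simp only [Set.mem_setOf_eq, Set.mem_iUnion, exists_prop]
    constructor
    · intro hreach
      obtain ⟨l, hl⟩ := reach_tval hreach
      obtain ⟨b, hbB, hb⟩ := hBbasis (l, Pi.single pf n) ⟨hl, n, rfl⟩
      obtain ⟨tvb, -⟩ := hBs hbB
      exact ⟨b, hbB, ⟨emb_of_slf hb.1 tvb hl hb.2⟩⟩
    · rintro ⟨b, -, ⟨emb⟩⟩
      exact emb_reach emb
  rw [hcover]
  apply semilinear_biUnion
  intro b hbB
  obtain ⟨tvb, vb, hvb⟩ := hBs hbB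
  exact ESet_semilinear tvb vb hvb
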